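/- Let K ≥ 1, s ≥ 1, ρ > 0, and ω_l = √(ρ + l²). Then there exists a constant C (depending on K, s, ρ) such that for all finitely supported integer sequences k with ‖k‖ ≤ K, Σ_{l≥0} |k_l| ω_l^{2s+1} ≤ C · ω^{2s|k|} (1 + |k·ω|), where ω^{2s|k|} = Π_l ω_l^{2s|k_l|} and k·ω = Σ_l k_l ω_l. -/

import Mathlib

def knorm (k : ℕ →₀ ℤ) : ℤ := k.sum fun _ v => |v|

set_option maxHeartbeats 1000000

theorem stmt15 (K : ℕ) (hK : 1 ≤ K) (s ρ : ℝ) (hs : 1 ≤ s) (hρ : 0 < ρ) :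
    ∃ C : ℝ, 0 < C ∧ ∀ k : ℕ →₀ ℤ, knorm k ≤ (K : ℤ) →
      (∑ l ∈ k.support, (|k l| : ℝ) * Real.sqrt (ρ + (l : ℝ)^2) ^ (2 * s + 1))
        ≤ C * (∏ l ∈ k.support, Real.sqrt (ρ + (l : ℝ)^2) ^ (2 * s * (|k l| : ℝ))) *
            (1 + |∑ l ∈ k.support, (k l : ℝ) * Real.sqrt (ρ + (l : ℝ)^2)|) := by
  classical
  set ω : ℕ → ℝ := fun l => Real.sqrt (ρ + (l : ℝ)^2) with hωdef
  have hωpos : ∀ l, 0 < ω l := fun l => Real.sqrt_pos.2 (by positivity)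
  set m : ℝ := min 1 (Real.sqrt ρ) with hmdef
  have hm0 : 0 < m := lt_min one_pos (Real.sqrt_pos.2 hρ)
  have hm1 : m ≤ 1 := min_le_left _ _
  have hmω : ∀ l, m ≤ ω l := by
    intro l
    exact (min_le_right 1 _).trans (Real.sqrt_le_sqrt (by nlinarith [sq_nonneg ((l:ℝ))]))
  have hmono : ∀ {i j : ℕ}, i ≤ j → ω i ≤ ω j := by
    intro i j hij
    apply Real.sqrt_le_sqrt
    have h : (i : ℝ) ≤ (j : ℝ) := by exact_mod_cast hij
    nlinarith [Nat.cast_nonneg (α := ℝ) i]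
  have hs0 : (0:ℝ) ≤ 2 * s := by linarith
  set c1 : ℝ := (m ^ (2 * s * (K:ℝ))) ^ K with hc1def
  set c0 : ℝ := m ^ (2 * s * (K:ℝ)) * c1 with hc0def
  set c2 : ℝ := m ^ (2 * s - 1) with hc2def
  have hmpow : 0 < m ^ (2 * s * (K:ℝ)) := Real.rpow_pos_of_pos hm0 _
  have hc1 : 0 < c1 := pow_pos hmpow K
  have hc0 : 0 < c0 := mul_pos hmpow hc1
  have hc2 : 0 < c2 := Real.rpow_pos_of_pos hm0 _
  set c3 : ℝ := c1⁻¹ + (K:ℝ) * (K:ℝ) * c2⁻¹ * c0⁻¹ with hc3def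
  have hc3 : 0 < c3 := by positivity
  refine ⟨(K:ℝ) * c3 * (m ^ (2 * s * (K:ℝ)))⁻¹, by positivity, ?_⟩
  intro k hk
  set C : ℝ := (K:ℝ) * c3 * (m ^ (2 * s * (K:ℝ)))⁻¹ with hCdef
  have hC : 0 < C := by positivity
  -- basic bounds on k
  have hknorm : (∑ l ∈ k.support, (|k l| : ℝ)) ≤ (K:ℝ) := by
    have : (∑ l ∈ k.support, |k l|) ≤ (K:ℤ) := hk
    exact_mod_cast this
  have habs_le : ∀ l, (|k l| : ℝ) ≤ (K:ℝ) := by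
    intro l
    by_cases hl : l ∈ k.support
    · have h1 : (|k l|) ≤ ∑ j ∈ k.support, |k j| :=
        Finset.single_le_sum (fun j _ => abs_nonneg (k j)) hl
      have : (|k l|) ≤ (K:ℤ) := le_trans h1 hk
      exact_mod_cast this
    · have : k l = 0 := Finsupp.notMem_support_iff.1 hl
      simp [this]
  have hone_le : ∀ l ∈ k.support, (1:ℝ) ≤ (|k l| : ℝ) := by
    intro l hl
    have : k l ≠ 0 := Finsupp.mem_support_iff.1 hl
    have : (1:ℤ) ≤ |k l| := Int.one_le_abs (by omega)
    exact_mod_cast this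
  have hcardK : k.support.card ≤ K := by
    have h1 : ∑ l ∈ k.support, (1:ℤ) ≤ ∑ l ∈ k.support, |k l| :=
      Finset.sum_le_sum (fun l hl => Int.one_le_abs (Finsupp.mem_support_iff.1 hl))
    rw [Finset.sum_const, nsmul_eq_mul, mul_one] at h1
    have h2 : (k.support.card : ℤ) ≤ (K:ℤ) := le_trans h1 hk
    exact_mod_cast h2
  -- head factor bound
  have hhead : ∀ l ∈ k.support,
      m ^ (2 * s * (K:ℝ)) * ω l ^ (2 * s) ≤ ω l ^ (2 * s * (|k l| : ℝ)) := by
    intro l hl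
    have h1 : (1:ℝ) ≤ (|k l| : ℝ) := hone_le l hl
    have hsplit : 2 * s * (|k l| : ℝ) = 2 * s + 2 * s * ((|k l| : ℝ) - 1) := by ring
    rw [hsplit, Real.rpow_add (hωpos l), mul_comm]
    apply mul_le_mul_of_nonneg_left _ (Real.rpow_nonneg (hωpos l).le _)
    calc m ^ (2 * s * (K:ℝ)) ≤ m ^ (2 * s * ((|k l| : ℝ) - 1)) := by
          apply Real.rpow_le_rpow_of_exponent_ge hm0 hm1
          have := habs_le l
          nlinarith
      _ ≤ ω l ^ (2 * s * ((|k l| : ℝ) - 1)) :=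
          Real.rpow_le_rpow hm0.le (hmω l) (by nlinarith)
  -- lower bound for partial products
  have hprodlow : ∀ t ⊆ k.support, c1 ≤ ∏ l ∈ t, ω l ^ (2 * s * (|k l| : ℝ)) := by
    intro t ht
    have hb1 : m ^ (2 * s * (K:ℝ)) ≤ 1 := Real.rpow_le_one hm0.le hm1 (by positivity)
    have hcard : t.card ≤ K := le_trans (Finset.card_le_card ht) hcardK
    calc c1 ≤ (m ^ (2 * s * (K:ℝ))) ^ t.card := pow_le_pow_of_le_one hmpow.le hb1 hcard
      _ = ∏ _l ∈ t, m ^ (2 * s * (K:ℝ)) := by rw [Finset.prod_const]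
      _ ≤ ∏ l ∈ t, ω l ^ (2 * s * (|k l| : ℝ)) := by
          apply Finset.prod_le_prod (fun _ _ => hmpow.le)
          intro l hl
          have hll := ht hl
          have h1 : (1:ℝ) ≤ (|k l| : ℝ) := hone_le l hll
          calc m ^ (2 * s * (K:ℝ)) ≤ m ^ (2 * s * (|k l| : ℝ)) := by
                apply Real.rpow_le_rpow_of_exponent_ge hm0 hm1
                have := habs_le l
                nlinarith
            _ ≤ ω l ^ (2 * s * (|k l| : ℝ)) :=
                Real.rpow_le_rpow hm0.le (hmω l) (by nlinarith)
  -- pulling one factor out of a partial product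
  have hpull : ∀ t ⊆ k.support, ∀ l ∈ t,
      c0 * ω l ^ (2 * s) ≤ ∏ j ∈ t, ω j ^ (2 * s * (|k j| : ℝ)) := by
    intro t ht l hl
    rw [← Finset.mul_prod_erase t _ hl]
    have h1 : m ^ (2 * s * (K:ℝ)) * ω l ^ (2 * s) ≤ ω l ^ (2 * s * (|k l| : ℝ)) :=
      hhead l (ht hl)
    have h2 : c1 ≤ ∏ j ∈ t.erase l, ω j ^ (2 * s * (|k j| : ℝ)) :=
      hprodlow _ (le_trans (Finset.erase_subset l t) ht)
    calc c0 * ω l ^ (2 * s)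
        = (m ^ (2 * s * (K:ℝ)) * ω l ^ (2 * s)) * c1 := by rw [hc0def]; ring
      _ ≤ ω l ^ (2 * s * (|k l| : ℝ)) * ∏ j ∈ t.erase l, ω j ^ (2 * s * (|k j| : ℝ)) := by
          apply mul_le_mul h1 h2 hc1.le (Real.rpow_nonneg (hωpos l).le _)

  -- rewrite goal in terms of ω
  have hrw : ∀ l : ℕ, Real.sqrt (ρ + (l : ℝ)^2) = ω l := fun _ => rfl
  simp only [hrw]
  by_cases hne : k.support.Nonempty
  · set L := k.support.max' hne with hLdef
    have hLmem : L ∈ k.support := k.support.max'_mem hne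
    have hωL : ∀ l ∈ k.support, ω l ≤ ω L := fun l hl => hmono (Finset.le_max' _ _ hl)
    set E := k.support.erase L with hEdef
    set Q : ℝ := ∏ l ∈ E, ω l ^ (2 * s * (|k l| : ℝ)) with hQdef
    set Sω : ℝ := ∑ l ∈ k.support, (k l : ℝ) * ω l with hSdef
    have hQpos : 0 < Q := Finset.prod_pos (fun l _ => Real.rpow_pos_of_pos (hωpos l) _)
    have hQc1 : c1 ≤ Q := hprodlow E (Finset.erase_subset L k.support)
    -- claim 1 : ω L ≤ |Sω| + ∑_{E} |k_l| ω_l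
    have hclaim1 : ω L ≤ |Sω| + ∑ l ∈ E, (|k l| : ℝ) * ω l := by
      have hsplit : (k L : ℝ) * ω L + ∑ l ∈ E, (k l : ℝ) * ω l = Sω :=
        Finset.add_sum_erase k.support (fun l => (k l : ℝ) * ω l) hLmem
      have htri : |(k L : ℝ) * ω L| ≤ |Sω| + |∑ l ∈ E, (k l : ℝ) * ω l| := by
        have : (k L : ℝ) * ω L = Sω - ∑ l ∈ E, (k l : ℝ) * ω l := by linarith
        rw [this]
        exact abs_sub _ _
      have habsum : |∑ l ∈ E, (k l : ℝ) * ω l| ≤ ∑ l ∈ E, (|k l| : ℝ) * ω l := by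
        refine le_trans (Finset.abs_sum_le_sum_abs _ _) (le_of_eq ?_)
        refine Finset.sum_congr rfl (fun l _ => ?_)
        rw [abs_mul, abs_of_pos (hωpos l)]
      have hkL : |(k L : ℝ) * ω L| = (|k L| : ℝ) * ω L := by
        rw [abs_mul, abs_of_pos (hωpos L)]
      have h1 : (1:ℝ) ≤ (|k L| : ℝ) := hone_le L hLmem
      have h2 : ω L ≤ (|k L| : ℝ) * ω L := le_mul_of_one_le_left (hωpos L).le h1
      rw [hkL] at htri
      linarith
    -- claim 2 : erased sum controlled by Q
    have hclaim2 : ∑ l ∈ E, (|k l| : ℝ) * ω l ≤ (K:ℝ) * ((K:ℝ) * c2⁻¹ * c0⁻¹ * Q) := by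
      have hterm : ∀ l ∈ E, (|k l| : ℝ) * ω l ≤ (K:ℝ) * c2⁻¹ * c0⁻¹ * Q := by
        intro l hl
        have hωl2s : ω l ^ (2 * s) ≤ c0⁻¹ * Q := by
          have hp := hpull E (Finset.erase_subset L k.support) l hl
          rw [inv_mul_eq_div, le_div_iff₀ hc0, mul_comm]
          exact hp
        have hωlc2 : ω l ≤ c2⁻¹ * ω l ^ (2 * s) := by
          have h2 : ω l ^ (2 * s) = ω l * ω l ^ (2 * s - 1) := by
            have h := Real.rpow_add (hωpos l) 1 (2 * s - 1)
            rw [Real.rpow_one, show (1:ℝ) + (2 * s - 1) = 2 * s by ring] at h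
            exact h
          have h3 : c2 ≤ ω l ^ (2 * s - 1) :=
            Real.rpow_le_rpow hm0.le (hmω l) (by linarith)
          rw [h2, inv_mul_eq_div, le_div_iff₀ hc2]
          exact mul_le_mul_of_nonneg_left h3 (hωpos l).le
        calc (|k l| : ℝ) * ω l ≤ (K:ℝ) * ω l :=
              mul_le_mul_of_nonneg_right (habs_le l) (hωpos l).le
          _ ≤ (K:ℝ) * (c2⁻¹ * (c0⁻¹ * Q)) := by
              apply mul_le_mul_of_nonneg_left _ (Nat.cast_nonneg K)
              calc ω l ≤ c2⁻¹ * ω l ^ (2 * s) := hωlc2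
                _ ≤ c2⁻¹ * (c0⁻¹ * Q) :=
                    mul_le_mul_of_nonneg_left hωl2s (inv_nonneg.2 hc2.le)
          _ = (K:ℝ) * c2⁻¹ * c0⁻¹ * Q := by ring
      have hcardE : (E.card : ℝ) ≤ (K:ℝ) := by
        have : E.card ≤ K := le_trans (Finset.card_le_card (Finset.erase_subset _ _)) hcardK
        exact_mod_cast this
      have hDnn : 0 ≤ (K:ℝ) * c2⁻¹ * c0⁻¹ * Q := by positivity
      calc ∑ l ∈ E, (|k l| : ℝ) * ω l ≤ ∑ _l ∈ E, (K:ℝ) * c2⁻¹ * c0⁻¹ * Q :=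
            Finset.sum_le_sum hterm
        _ = (E.card : ℝ) * ((K:ℝ) * c2⁻¹ * c0⁻¹ * Q) := by
            rw [Finset.sum_const, nsmul_eq_mul]
        _ ≤ (K:ℝ) * ((K:ℝ) * c2⁻¹ * c0⁻¹ * Q) :=
            mul_le_mul_of_nonneg_right hcardE hDnn
    -- combine: ω L ≤ (1+|Sω|) * (c3 * Q)
    have hωLbound : ω L ≤ (1 + |Sω|) * (c3 * Q) := by
      have hA2 : (1:ℝ) ≤ c1⁻¹ * Q := by
        rw [inv_mul_eq_div, le_div_iff₀ hc1, one_mul]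
        exact hQc1
      have habsnn : (0:ℝ) ≤ |Sω| := abs_nonneg _
      have hXQ : (0:ℝ) ≤ (K:ℝ) * (K:ℝ) * c2⁻¹ * c0⁻¹ * Q := by positivity
      have hmul : |Sω| * 1 ≤ |Sω| * (c1⁻¹ * Q) := mul_le_mul_of_nonneg_left hA2 habsnn
      have hexp : (1 + |Sω|) * (c3 * Q)
          = c1⁻¹ * Q + (K:ℝ) * (K:ℝ) * c2⁻¹ * c0⁻¹ * Q
            + |Sω| * (c1⁻¹ * Q) + |Sω| * ((K:ℝ) * (K:ℝ) * c2⁻¹ * c0⁻¹ * Q) := by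
        rw [hc3def]; ring
      have hXQ2 : (0:ℝ) ≤ |Sω| * ((K:ℝ) * (K:ℝ) * c2⁻¹ * c0⁻¹ * Q) := by positivity
      have hcl : ω L ≤ |Sω| + (K:ℝ) * ((K:ℝ) * c2⁻¹ * c0⁻¹ * Q) := le_trans hclaim1 (add_le_add (le_refl _) hclaim2)
      rw [hexp]; linarith
    -- bound the LHS sum
    have hLHS : (∑ l ∈ k.support, (|k l| : ℝ) * ω l ^ (2 * s + 1))
        ≤ (K:ℝ) * ω L ^ (2 * s + 1) := by
      have hterm : ∀ l ∈ k.support,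
          (|k l| : ℝ) * ω l ^ (2 * s + 1) ≤ (|k l| : ℝ) * ω L ^ (2 * s + 1) := by
        intro l hl
        apply mul_le_mul_of_nonneg_left _ (by positivity)
        exact Real.rpow_le_rpow (hωpos l).le (hωL l hl) (by linarith)
      calc (∑ l ∈ k.support, (|k l| : ℝ) * ω l ^ (2 * s + 1))
          ≤ ∑ l ∈ k.support, (|k l| : ℝ) * ω L ^ (2 * s + 1) := Finset.sum_le_sum hterm
        _ = (∑ l ∈ k.support, (|k l| : ℝ)) * ω L ^ (2 * s + 1) := by
            rw [← Finset.sum_mul]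
        _ ≤ (K:ℝ) * ω L ^ (2 * s + 1) :=
            mul_le_mul_of_nonneg_right hknorm (Real.rpow_nonneg (hωpos L).le _)
    -- lower bound for the full product
    have hPge : m ^ (2 * s * (K:ℝ)) * ω L ^ (2 * s) * Q
        ≤ ∏ l ∈ k.support, ω l ^ (2 * s * (|k l| : ℝ)) := by
      rw [← Finset.mul_prod_erase k.support _ hLmem, ← hEdef, ← hQdef]
      exact mul_le_mul_of_nonneg_right (hhead L hLmem) hQpos.le
    -- final chain
    have hsplit21 : ω L ^ (2 * s + 1) = ω L ^ (2 * s) * ω L := by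
      rw [Real.rpow_add (hωpos L), Real.rpow_one]
    have h1 : (∑ l ∈ k.support, (|k l| : ℝ) * ω l ^ (2 * s + 1))
        ≤ (K:ℝ) * (ω L ^ (2 * s) * ((1 + |Sω|) * (c3 * Q))) := by
      calc (∑ l ∈ k.support, (|k l| : ℝ) * ω l ^ (2 * s + 1))
          ≤ (K:ℝ) * ω L ^ (2 * s + 1) := hLHS
        _ = (K:ℝ) * (ω L ^ (2 * s) * ω L) := by rw [hsplit21]
        _ ≤ (K:ℝ) * (ω L ^ (2 * s) * ((1 + |Sω|) * (c3 * Q))) := by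
            apply mul_le_mul_of_nonneg_left _ (Nat.cast_nonneg K)
            exact mul_le_mul_of_nonneg_left hωLbound (Real.rpow_nonneg (hωpos L).le _)
    have h2 : (K:ℝ) * (ω L ^ (2 * s) * ((1 + |Sω|) * (c3 * Q)))
        ≤ C * (∏ l ∈ k.support, ω l ^ (2 * s * (|k l| : ℝ))) * (1 + |Sω|) := by
      have h3 : (K:ℝ) * (ω L ^ (2 * s) * ((1 + |Sω|) * (c3 * Q)))
          = (C * (m ^ (2 * s * (K:ℝ)) * ω L ^ (2 * s) * Q)) * (1 + |Sω|) := by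
        rw [hCdef]; field_simp
      rw [h3]
      apply mul_le_mul_of_nonneg_right _ (by positivity)
      exact mul_le_mul_of_nonneg_left hPge hC.le
    exact le_trans h1 h2
  · rw [Finset.not_nonempty_iff_eq_empty] at hne
    rw [hne]
    simp only [Finset.sum_empty, Finset.prod_empty, abs_zero, add_zero, mul_one]
    exact hC.le
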